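/- For all n ≥ 1, the number of permutations of [n] avoiding both generalized patterns 1-32 and 3-12 equals 2^{n-1}. -/

import Mathlib

def contains132 {n : ℕ} (π : Equiv.Perm (Fin n)) : Prop :=
  ∃ i j : ℕ, ∃ (_ : i < j) (hj : j + 1 < n),
    π ⟨i, by omega⟩ < π ⟨j + 1, hj⟩ ∧ π ⟨j + 1, hj⟩ < π ⟨j, by omega⟩

def contains312 {n : ℕ} (π : Equiv.Perm (Fin n)) : Prop :=
  ∃ i j : ℕ, ∃ (_ : i < j) (hj : j + 1 < n),
    π ⟨j, by omega⟩ < π ⟨j + 1, hj⟩ ∧ π ⟨j + 1, hj⟩ < π ⟨i, by omega⟩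

namespace Stmt10Aux

/-- Each entry (after the first two) is a prefix max or prefix min, in conditional form. -/
def Ext {n : ℕ} (π : Equiv.Perm (Fin n)) : Prop :=
  ∀ j : ℕ, ∀ (hj : j + 1 < n), ∀ i : ℕ, ∀ (hij : i ≤ j),
    ((π ⟨j, by omega⟩ < π ⟨j + 1, hj⟩) → π ⟨i, by omega⟩ < π ⟨j + 1, hj⟩) ∧
    ((π ⟨j + 1, hj⟩ < π ⟨j, by omega⟩) → π ⟨j + 1, hj⟩ < π ⟨i, by omega⟩)

lemma avoid_iff {n : ℕ} (π : Equiv.Perm (Fin n)) :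
    (¬ contains132 π ∧ ¬ contains312 π) ↔ Ext π := by
  constructor
  · rintro ⟨h132, h312⟩ j hj i hij
    rcases Nat.eq_or_lt_of_le hij with rfl | hlt
    · exact ⟨fun h => h, fun h => h⟩
    constructor
    · intro h
      rcases lt_trichotomy (π ⟨i, by omega⟩) (π ⟨j + 1, hj⟩) with h1 | h1 | h1
      · exact h1
      · exact absurd (π.injective h1) (by simp [Fin.ext_iff]; omega)
      · exact absurd ⟨i, j, hlt, hj, h, h1⟩ h312
    · intro h
      rcases lt_trichotomy (π ⟨j + 1, hj⟩) (π ⟨i, by omega⟩) with h1 | h1 | h1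
      · exact h1
      · exact absurd (π.injective h1) (by simp [Fin.ext_iff]; omega)
      · exact absurd ⟨i, j, hlt, hj, h1, h⟩ h132
  · intro hE
    constructor
    · rintro ⟨i, j, hij, hj, h1, h2⟩
      exact absurd h1 (lt_asymm ((hE j hj i hij.le).2 h2))
    · rintro ⟨i, j, hij, hj, h1, h2⟩
      exact absurd h2 (lt_asymm ((hE j hj i hij.le).1 h1))

lemma pair_iff {n : ℕ} {π : Equiv.Perm (Fin n)} (hE : Ext π) {k : ℕ} (hk : k + 1 < n)
    {i : ℕ} (hik : i ≤ k) :
    (π ⟨i, by omega⟩ < π ⟨k + 1, hk⟩ ↔ π ⟨k, by omega⟩ < π ⟨k + 1, hk⟩) := by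
  constructor
  · intro h
    rcases lt_trichotomy (π ⟨k, by omega⟩) (π ⟨k + 1, hk⟩) with h1 | h1 | h1
    · exact h1
    · exact absurd (π.injective h1) (by simp [Fin.ext_iff])
    · exact absurd h (lt_asymm ((hE k hk i hik).2 h1))
  · exact fun h1 => (hE k hk i hik).1 h1

/-- Pairwise comparisons are determined by the ascent/descent signature. -/
lemma ext_inj {n : ℕ} {π σ : Equiv.Perm (Fin n)} (hπ : Ext π) (hσ : Ext σ)
    (hs : ∀ k : ℕ, ∀ (hk : k + 1 < n),
      (π ⟨k, by omega⟩ < π ⟨k + 1, hk⟩ ↔ σ ⟨k, by omega⟩ < σ ⟨k + 1, hk⟩)) :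
    π = σ := by
  have key : ∀ a b : Fin n, a < b → (π a < π b ↔ σ a < σ b) := by
    intro a b hab
    have hb1 : 1 ≤ b.1 := by
      have := Fin.lt_def.mp hab; omega
    have hk : (b.1 - 1) + 1 < n := by have := b.isLt; omega
    have hbeq : b = ⟨(b.1 - 1) + 1, hk⟩ := Fin.ext (by simp; omega)
    have haeq : a = ⟨a.1, a.isLt⟩ := rfl
    have hik : a.1 ≤ b.1 - 1 := by have := Fin.lt_def.mp hab; omega
    rw [hbeq, haeq]
    rw [pair_iff hπ hk hik, pair_iff hσ hk hik]
    exact hs (b.1 - 1) hk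
  have key2 : ∀ a b : Fin n, a ≠ b → (π a < π b ↔ σ a < σ b) := by
    intro a b hab
    rcases lt_or_gt_of_ne hab with h | h
    · exact key a b h
    · have h1 := key b a h
      have hne : π a ≠ π b := fun he => hab (π.injective he)
      have hne2 : σ a ≠ σ b := fun he => hab (σ.injective he)
      constructor
      · intro hlt
        rcases hne2.lt_or_gt with h2 | h2
        · exact h2
        · exact absurd (h1.mpr h2) (lt_asymm hlt)
      · intro hlt
        rcases hne.lt_or_gt with h2 | h2
        · exact h2
        · exact absurd (h1.mp h2) (lt_asymm hlt)
  have keyle : ∀ a b : Fin n, (π a ≤ π b ↔ σ a ≤ σ b) := by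
    intro a b
    rcases eq_or_ne a b with rfl | hab
    · simp
    · rw [← not_lt, ← not_lt]
      exact not_congr (key2 b a hab.symm)
  let e : Fin n ≃o Fin n :=
    { toEquiv := π.symm.trans σ
      map_rel_iff' := by
        intro a b
        show σ (π.symm a) ≤ σ (π.symm b) ↔ a ≤ b
        rw [← keyle, π.apply_symm_apply, π.apply_symm_apply] }
  have he : ∀ x : Fin n, σ (π.symm x) = x := by
    intro x
    have := Fin.coe_orderIso_apply e x
    exact Fin.ext this
  apply Equiv.ext
  intro y
  have := he (π y)
  rw [π.symm_apply_apply] at this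
  exact this.symm

/-! ### Construction from a signature -/

def cnt (S : ℕ → Bool) (n j : ℕ) : ℕ :=
  ((Finset.Ico j (n - 1)).filter (fun m => S m = false)).card

def g (S : ℕ → Bool) (n j : ℕ) : ℕ :=
  if j = 0 then cnt S n 0 else if S (j - 1) then j + cnt S n j else cnt S n j

lemma cnt_le (S : ℕ → Bool) (n j : ℕ) : cnt S n j ≤ n - 1 - j := by
  calc cnt S n j ≤ (Finset.Ico j (n - 1)).card := Finset.card_filter_le _ _
    _ = n - 1 - j := Nat.card_Ico _ _

lemma cnt_anti (S : ℕ → Bool) (n : ℕ) {i j : ℕ} (h : i ≤ j) : cnt S n j ≤ cnt S n i :=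
  Finset.card_le_card (Finset.filter_subset_filter _ (Finset.Ico_subset_Ico h le_rfl))

lemma cnt_succ (S : ℕ → Bool) (n : ℕ) {j : ℕ} (h : j < n - 1) :
    cnt S n j = (if S j then 0 else 1) + cnt S n (j + 1) := by
  unfold cnt
  rw [← Finset.insert_Ico_add_one_left_eq_Ico h, Finset.filter_insert]
  by_cases hS : S j = true
  · rw [if_neg (by simp [hS]), if_pos hS]
    omega
  · have hS' : S j = false := by simp at hS; exact hS
    rw [if_pos hS', Finset.card_insert_of_notMem (by simp), if_neg hS]
    omega

lemma cnt_le_add (S : ℕ → Bool) (n : ℕ) {i j : ℕ} (h : i ≤ j) :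
    cnt S n i ≤ cnt S n j + (j - i) := by
  induction j with
  | zero => interval_cases i; simp
  | succ j ih =>
    rcases Nat.eq_or_lt_of_le h with rfl | hlt
    · simp
    · have hij : i ≤ j := by omega
      by_cases hj : j < n - 1
      · have h1 := cnt_succ S n hj
        have h2 := ih hij
        have hb : (if S j = true then 0 else 1) ≤ 1 := by split_ifs <;> omega
        omega
      · have h1 : cnt S n j ≤ cnt S n (j+1) + 0 := by
          unfold cnt
          rw [Finset.Ico_eq_empty (by omega), Finset.Ico_eq_empty (by omega)]
          simp
        have h2 := ih hij
        omega

lemma g_le_add (S : ℕ → Bool) (n j : ℕ) : g S n j ≤ j + cnt S n j := by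
  rcases eq_or_ne j 0 with rfl | h
  · simp [g]
  · unfold g; rw [if_neg h]; split_ifs <;> omega

lemma cnt_le_g (S : ℕ → Bool) (n j : ℕ) : cnt S n j ≤ g S n j := by
  rcases eq_or_ne j 0 with rfl | h
  · simp [g]
  · unfold g; rw [if_neg h]; split_ifs <;> omega

lemma g_lt (S : ℕ → Bool) {n : ℕ} (hn : 1 ≤ n) {j : ℕ} (hj : j < n) : g S n j < n := by
  have h1 := cnt_le S n j
  rcases eq_or_ne j 0 with rfl | h
  · unfold g; rw [if_pos rfl]; omega
  · unfold g; rw [if_neg h]; split_ifs <;> omega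

lemma extProp (S : ℕ → Bool) (n : ℕ) {j : ℕ} (hj : j < n - 1) {i : ℕ} (hij : i ≤ j) :
    (S j = true → g S n i < g S n (j + 1)) ∧ (S j = false → g S n (j + 1) < g S n i) := by
  constructor
  · intro hS
    have h1 : cnt S n j = cnt S n (j + 1) := by rw [cnt_succ S n hj, hS]; simp
    have h2 : g S n i ≤ i + cnt S n i := g_le_add S n i
    have h3 : cnt S n i ≤ cnt S n j + (j - i) := cnt_le_add S n hij
    have h4 : g S n (j + 1) = (j + 1) + cnt S n (j + 1) := by
      unfold g; simp [hS]
    omega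
  · intro hS
    have h1 : cnt S n j = 1 + cnt S n (j + 1) := by rw [cnt_succ S n hj, hS]; simp
    have h2 : cnt S n j ≤ cnt S n i := cnt_anti S n hij
    have h3 : cnt S n i ≤ g S n i := cnt_le_g S n i
    have h4 : g S n (j + 1) = cnt S n (j + 1) := by
      unfold g; simp [hS]
    omega

lemma g_inj (S : ℕ → Bool) (n : ℕ) {i j : ℕ} (hij : i < j) (hj : j < n) :
    g S n i ≠ g S n j := by
  have hk : j - 1 < n - 1 := by omega
  have hik : i ≤ j - 1 := by omega
  have hP := extProp S n hk hik
  have hjeq : (j - 1) + 1 = j := by omega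
  rw [hjeq] at hP
  cases hS : S (j - 1)
  · exact (hP.2 hS).ne'
  · exact (hP.1 hS).ne

end Stmt10Aux

open Stmt10Aux in
theorem stmt10 (n : ℕ) (hn : 1 ≤ n) :
    Nat.card {π : Equiv.Perm (Fin n) // ¬ contains132 π ∧ ¬ contains312 π} = 2 ^ (n - 1) := by
  classical
  let Φ : {π : Equiv.Perm (Fin n) // ¬ contains132 π ∧ ¬ contains312 π} → (Fin (n - 1) → Bool) :=
    fun p k => decide (p.1 ⟨k.1, by have := k.isLt; omega⟩ < p.1 ⟨k.1 + 1, by have := k.isLt; omega⟩)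
  have hbij : Function.Bijective Φ := by
    constructor
    · rintro ⟨π, hπ⟩ ⟨σ, hσ⟩ h
      have hEπ := (avoid_iff π).mp hπ
      have hEσ := (avoid_iff σ).mp hσ
      refine Subtype.ext (ext_inj hEπ hEσ ?_)
      intro k hk
      have hk' : k < n - 1 := by omega
      have := congrFun h ⟨k, hk'⟩
      simpa [Φ] using this
    · intro s
      set S : ℕ → Bool := fun k => if h : k < n - 1 then s ⟨k, h⟩ else true with hSdef
      have hinj : Function.Injective (fun j : Fin n => (⟨g S n j.1, g_lt S hn j.isLt⟩ : Fin n)) := by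
        intro a b hab
        simp only [Fin.mk.injEq] at hab
        rcases lt_trichotomy a.1 b.1 with h | h | h
        · exact absurd hab (g_inj S n h b.isLt)
        · exact Fin.ext h
        · exact absurd hab.symm (g_inj S n h a.isLt)
      let π : Equiv.Perm (Fin n) :=
        Equiv.ofBijective _ (Finite.injective_iff_bijective.mp hinj)
      have hπ_apply : ∀ j : Fin n, π j = ⟨g S n j.1, g_lt S hn j.isLt⟩ := fun j => rfl
      have hπlt : ∀ a b : Fin n, (π a < π b ↔ g S n a.1 < g S n b.1) := by
        intro a b
        rw [hπ_apply, hπ_apply]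
        exact Fin.mk_lt_mk
      have hE : Ext π := by
        intro j hj i hij
        have hj' : j < n - 1 := by omega
        have hPi := extProp S n hj' hij
        have hPj := extProp S n hj' (le_refl j)
        constructor
        · intro h
          rw [hπlt] at h ⊢
          simp only [Fin.val_mk] at h ⊢
          cases hS : S j
          · have := hPj.2 hS; omega
          · exact hPi.1 hS
        · intro h
          rw [hπlt] at h ⊢
          simp only [Fin.val_mk] at h ⊢
          cases hS : S j
          · exact hPi.2 hS
          · have := hPj.1 hS; omega
      refine ⟨⟨π, (avoid_iff π).mpr hE⟩, ?_⟩
      funext k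
      have hk' : k.1 < n - 1 := k.isLt
      have hSk : S k.1 = s k := by rw [hSdef]; simp [hk']
      have hP := extProp S n hk' (le_refl k.1)
      show decide (π ⟨k.1, _⟩ < π ⟨k.1 + 1, _⟩) = s k
      rw [← hSk]
      cases hS : S k.1
      · simp only [decide_eq_false_iff_not]
        rw [hπlt]
        simp only [Fin.val_mk]
        have := hP.2 hS
        omega
      · simp only [decide_eq_true_eq]
        rw [hπlt]
        simp only [Fin.val_mk]
        exact hP.1 hS
  rw [Nat.card_eq_of_bijective Φ hbij]
  simp [Nat.card_eq_fintype_card]
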